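/- arXiv:1003.4057 — 6 statements merged into one kernel-verified Lean document; each statement's English description precedes it below -/
import Mathlib

section
/- Let q ≥ 1 be an even integer and let C ⊆ B_q^4 be a code of words of length 4 over the alphabet B_q that is capable of correcting single deletions (equivalently, ρ(C) > 2 in the deletion–insertion metric). Then |C| ≤ q²(q+2)/4. -/
/-- The set of words obtained from `x` by deleting `s` of its letters,
i.e. the subsequences of `x` of length `x.length - s`. -/
def Deletions (s : ℕ) (x : List ℕ) : Set (List ℕ) :=
  {y | y.Sublist x ∧ y.length + s = x.length}

/-- A code `C` is capable of correcting `s` deletions if the deletion sets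
of distinct codewords are pairwise disjoint. -/
def CorrectsDeletions (s : ℕ) (C : Set (List ℕ)) : Prop :=
  C.Pairwise fun x y => Disjoint (Deletions s x) (Deletions s y)

/-- `x` is a word of length `n` over the alphabet `B_q = {0, 1, …, q-1}`. -/
def IsWord (q n : ℕ) (x : List ℕ) : Prop :=
  x.length = n ∧ ∀ a ∈ x, a < q

/-- The set of cardinalities of codes in `B_q^4` capable of correcting single deletions. -/
def codeSizes (q : ℕ) : Set ℕ :=
  {k | ∃ C : Set (List ℕ), (∀ x ∈ C, IsWord q 4 x) ∧
    CorrectsDeletions 1 C ∧ C.ncard = k}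



def Wt : List ℕ → ℕ
  | [p, r, s] => if p = r then (if r = s then 4 else 2) else (if r = s then 2 else 1)
  | _ => 0

def outA : List ℕ → Option ℕ
  | [p, r, s] => if p = s ∧ p ≠ r then some p else none
  | _ => none

def ballF : List ℕ → Finset (List ℕ)
  | [a, b, c, d] => {[b,c,d], [a,c,d], [a,b,d], [a,b,c]}
  | _ => ∅

def tc (a : ℕ) (x : List ℕ) : ℕ := ((ballF x).filter (fun y => outA y = some a)).card

def ballW (x : List ℕ) : ℕ := (ballF x).sum Wt

def V3 (q : ℕ) : Finset (List ℕ) :=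
  ((Finset.range q) ×ˢ (Finset.range q) ×ˢ (Finset.range q)).image
    (fun p => [p.1, p.2.1, p.2.2])

def Aa (q a : ℕ) : Finset (List ℕ) := ((Finset.range q).erase a).image (fun r => [a, r, a])

lemma mem_V3 {q u v w : ℕ} (hu : u < q) (hv : v < q) (hw : w < q) : [u, v, w] ∈ V3 q :=
  Finset.mem_image.2 ⟨(u, (v, w)), by
    simp [Finset.mem_product, Finset.mem_range, hu, hv, hw], rfl⟩

lemma Wt_factor (u v w : ℕ) :
    Wt [u, v, w] = (1 + if u = v then 1 else 0) * (1 + if v = w then 1 else 0) := by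
  simp only [Wt]
  split_ifs <;> norm_num

lemma sum_V3_Wt (q : ℕ) : ∑ y ∈ V3 q, Wt y = q * (q + 1) ^ 2 := by
  rw [V3, Finset.sum_image]
  · rw [Finset.sum_product]
    have hrow : ∀ u ∈ Finset.range q,
        (∑ p ∈ (Finset.range q) ×ˢ (Finset.range q), Wt [u, p.1, p.2]) = (q+1)^2 := by
      intro u hu
      rw [Finset.sum_product]
      have hin : ∀ v ∈ Finset.range q,
          (∑ w ∈ Finset.range q, Wt [u, v, w]) = (1 + if u = v then 1 else 0) * (q + 1) := by
        intro v hv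
        have : (∑ w ∈ Finset.range q, Wt [u, v, w])
            = ∑ w ∈ Finset.range q, (1 + if u = v then 1 else 0) * (1 + if v = w then 1 else 0) := by
          exact Finset.sum_congr rfl fun w _ => Wt_factor u v w
        rw [this, ← Finset.mul_sum]
        congr 1
        rw [Finset.sum_add_distrib, Finset.sum_const, Finset.sum_ite_eq]
        simp [Finset.mem_range.1 hv]
      rw [Finset.sum_congr rfl hin, ← Finset.sum_mul]
      rw [Finset.sum_add_distrib, Finset.sum_const, Finset.sum_ite_eq]
      simp only [hu, if_pos, smul_eq_mul, Finset.card_range]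
      ring
    rw [Finset.sum_congr rfl hrow, Finset.sum_const, Finset.card_range, smul_eq_mul]
  · rintro ⟨u, v, w⟩ - ⟨u', v', w'⟩ - h
    simp only [List.cons.injEq, and_true] at h
    obtain ⟨h1, h2, h3⟩ := h
    subst h1; subst h2; subst h3; rfl

lemma Aa_card {q a : ℕ} (ha : a < q) : (Aa q a).card = q - 1 := by
  have hinj : Function.Injective (fun r : ℕ => [a, r, a]) := by
    intro r s h
    simpa using h
  rw [Aa, Finset.card_image_of_injective _ hinj,
    Finset.card_erase_of_mem (Finset.mem_range.2 ha), Finset.card_range]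

lemma Aa_sub {q a : ℕ} (ha : a < q) : Aa q a ⊆ V3 q := by
  intro y hy
  obtain ⟨r, hr, rfl⟩ := Finset.mem_image.1 hy
  exact mem_V3 ha (Finset.mem_range.1 (Finset.mem_of_mem_erase hr)) ha

lemma Aa_disj {q a b : ℕ} (hab : a ≠ b) : Disjoint (Aa q a) (Aa q b) := by
  rw [Finset.disjoint_left]
  intro y hy hy'
  obtain ⟨r, _, rfl⟩ := Finset.mem_image.1 hy
  obtain ⟨r', _, h⟩ := Finset.mem_image.1 hy'
  have h2 : a = b ∧ r = r' := by
    constructor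
    · simpa using congrArg (fun l => l.headI) h.symm
    · simpa using congrArg (fun l => l.tail.headI) h.symm
  exact hab h2.1

lemma Wt_Aa {q a : ℕ} {y : List ℕ} (hy : y ∈ Aa q a) : Wt y = 1 := by
  obtain ⟨r, hr, rfl⟩ := Finset.mem_image.1 hy
  have : r ≠ a := (Finset.mem_erase.1 hr).1
  simp [Wt, this, Ne.symm this]

lemma Aa_inter_ball {q a' a b c d : ℕ} (hb : b < q) (hc : c < q) :
    Aa q a' ∩ ballF [a, b, c, d] = (ballF [a, b, c, d]).filter (fun y => outA y = some a') := by
  ext y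
  simp only [Finset.mem_inter, Finset.mem_filter]
  constructor
  · rintro ⟨hyA, hyB⟩
    refine ⟨hyB, ?_⟩
    obtain ⟨r, hr, rfl⟩ := Finset.mem_image.1 hyA
    have : r ≠ a' := (Finset.mem_erase.1 hr).1
    simp [outA, Ne.symm this]
  · rintro ⟨hyB, hout⟩
    refine ⟨?_, hyB⟩
    simp only [ballF, Finset.mem_insert, Finset.mem_singleton] at hyB
    rcases hyB with rfl | rfl | rfl | rfl <;>
      simp only [outA, Option.ite_none_right_eq_some, Option.some.injEq] at hout
    · obtain ⟨⟨h1, h2⟩, h3⟩ := hout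
      subst h3
      exact Finset.mem_image.2 ⟨c, Finset.mem_erase.2 ⟨fun h => h2 h.symm, Finset.mem_range.2 hc⟩,
        by rw [h1]⟩
    · obtain ⟨⟨h1, h2⟩, h3⟩ := hout
      subst h3
      exact Finset.mem_image.2 ⟨c, Finset.mem_erase.2 ⟨fun h => h2 h.symm, Finset.mem_range.2 hc⟩,
        by rw [h1]⟩
    · obtain ⟨⟨h1, h2⟩, h3⟩ := hout
      subst h3
      exact Finset.mem_image.2 ⟨b, Finset.mem_erase.2 ⟨fun h => h2 h.symm, Finset.mem_range.2 hb⟩,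
        by rw [h1]⟩
    · obtain ⟨⟨h1, h2⟩, h3⟩ := hout
      subst h3
      exact Finset.mem_image.2 ⟨b, Finset.mem_erase.2 ⟨fun h => h2 h.symm, Finset.mem_range.2 hb⟩,
        by rw [h1]⟩

lemma tc_le_two (a' a b c d : ℕ) : tc a' [a, b, c, d] ≤ 2 := by
  have hsub : (ballF [a,b,c,d]).filter (fun y => outA y = some a')
      ⊆ {[a', c, a'], [a', b, a']} := by
    intro y hy
    obtain ⟨hball, hout⟩ := Finset.mem_filter.1 hy
    simp only [ballF, Finset.mem_insert, Finset.mem_singleton] at hball ⊢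
    rcases hball with rfl | rfl | rfl | rfl <;>
      simp only [outA, Option.ite_none_right_eq_some, Option.some.injEq] at hout <;>
      obtain ⟨⟨h1, h2⟩, h3⟩ := hout <;> subst h3
    · left; rw [h1]
    · left; rw [h1]
    · right; rw [h1]
    · right; rw [h1]
  calc tc a' [a,b,c,d] ≤ ({[a', c, a'], [a', b, a']} : Finset (List ℕ)).card :=
        Finset.card_le_card hsub
    _ ≤ 2 := (Finset.card_insert_le _ _).trans (by simp)

lemma tc_outer {a' a b c d : ℕ} (h : tc a' [a, b, c, d] = 1) : a' = a ∨ a' = b := by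
  have hne : ((ballF [a,b,c,d]).filter (fun y => outA y = some a')).Nonempty := by
    rw [← Finset.card_pos, ← tc, h]; norm_num
  obtain ⟨y, hy⟩ := hne
  obtain ⟨hball, hout⟩ := Finset.mem_filter.1 hy
  simp only [ballF, Finset.mem_insert, Finset.mem_singleton] at hball
  rcases hball with rfl | rfl | rfl | rfl <;>
    simp only [outA, Option.ite_none_right_eq_some, Option.some.injEq] at hout
  · exact Or.inr hout.2.symm
  · exact Or.inl hout.2.symm
  · exact Or.inl hout.2.symm
  · exact Or.inl hout.2.symm

lemma sub3 {y : List ℕ} {b c d : ℕ} (h : y.Sublist [b, c, d]) (hl : y.length = 2) :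
    y = [c, d] ∨ y = [b, d] ∨ y = [b, c] := by
  rcases List.sublist_cons_iff.1 h with h' | ⟨r, rfl, hr⟩
  · exact Or.inl (h'.eq_of_length hl)
  · right
    rcases List.sublist_cons_iff.1 hr with h'' | ⟨r', rfl, hr'⟩
    · left
      rw [h''.eq_of_length (by simpa using hl)]
    · right
      have : r' = [] := List.eq_nil_of_length_eq_zero (by simpa using hl)
      rw [this]

lemma sub4 {y : List ℕ} {a b c d : ℕ} (h : y.Sublist [a, b, c, d]) (hl : y.length = 3) :
    y = [b,c,d] ∨ y = [a,c,d] ∨ y = [a,b,d] ∨ y = [a,b,c] := by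
  rcases List.sublist_cons_iff.1 h with h' | ⟨r, rfl, hr⟩
  · exact Or.inl (h'.eq_of_length hl)
  · right
    rcases sub3 hr (by simpa using hl) with e | e | e <;> rw [e] <;> simp

lemma del_eq (a b c d : ℕ) :
    Deletions 1 [a, b, c, d] = (↑(ballF [a, b, c, d]) : Set (List ℕ)) := by
  ext y
  simp only [Deletions, Set.mem_setOf_eq, ballF, Finset.coe_insert, Set.mem_insert_iff,
    Finset.coe_singleton, Set.mem_singleton_iff]
  constructor
  · rintro ⟨hs, hl⟩
    exact sub4 hs (by simpa using hl)
  · rintro (rfl | rfl | rfl | rfl)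
    · exact ⟨(List.Sublist.refl _).cons _, rfl⟩
    · exact ⟨((List.Sublist.refl _).cons _).cons₂ _, rfl⟩
    · exact ⟨(((List.Sublist.refl _).cons _).cons₂ _).cons₂ _, rfl⟩
    · exact ⟨((((List.nil_sublist _).cons _).cons₂ _).cons₂ _).cons₂ _, rfl⟩

lemma filt2 (a b : ℕ) (P : ℕ → Prop) [DecidablePred P] :
    (({a, b} : Finset ℕ).filter P).card ≤ 2 :=
  le_trans (Finset.card_filter_le _ _) (le_trans (Finset.card_insert_le _ _) (by simp))

lemma filt1 {b : ℕ} (a : ℕ) {P : ℕ → Prop} [DecidablePred P] (hb : ¬ P b) :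
    (({a, b} : Finset ℕ).filter P).card ≤ 1 := by
  have h : ({a, b} : Finset ℕ).filter P ⊆ {a} := by
    intro z hz
    simp only [Finset.mem_filter, Finset.mem_insert, Finset.mem_singleton] at hz ⊢
    rcases hz with ⟨rfl | rfl, hp⟩
    · rfl
    · exact absurd hp hb
  simpa using Finset.card_le_card h

lemma filt1' {a : ℕ} (b : ℕ) {P : ℕ → Prop} [DecidablePred P] (ha : ¬ P a) :
    (({a, b} : Finset ℕ).filter P).card ≤ 1 := by
  have h : ({a, b} : Finset ℕ).filter P ⊆ {b} := by
    intro z hz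
    simp only [Finset.mem_filter, Finset.mem_insert, Finset.mem_singleton] at hz ⊢
    rcases hz with ⟨rfl | rfl, hp⟩
    · exact absurd hp ha
    · rfl
  simpa using Finset.card_le_card h

lemma filt0 {a b : ℕ} {P : ℕ → Prop} [DecidablePred P] (ha : ¬ P a) (hb : ¬ P b) :
    (({a, b} : Finset ℕ).filter P).card = 0 := by
  rw [Finset.card_eq_zero, Finset.filter_eq_empty_iff]
  intro z hz
  simp only [Finset.mem_insert, Finset.mem_singleton] at hz
  rcases hz with rfl | rfl
  · exact ha
  · exact hb

lemma key (a b c d : ℕ) :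
    (({a, b} : Finset ℕ).filter (fun a' => tc a' [a, b, c, d] = 1)).card + 4
      ≤ ballW [a, b, c, d] := by
  by_cases hab : a = b
  · subst hab
    by_cases hac : a = c
    · subst hac
      by_cases had : a = d
      · subst had
        -- aaaa
        have e : ballF [a,a,a,a] = {[a,a,a]} := by
          simp only [ballF]; ext y; simp
        have hta : ¬ tc a [a,a,a,a] = 1 := by
          rw [tc, e]; simp only [Finset.filter_singleton]; simp [Finset.filter_singleton, outA]
        have h0 := filt0 (P := fun a' => tc a' [a,a,a,a] = 1) hta hta
        have hw : ballW [a,a,a,a] = 4 := by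
          rw [ballW, e, Finset.sum_singleton]; simp [Wt]
        omega
      · -- aaad
        have e : ballF [a,a,a,d] = {[a,a,d],[a,a,a]} := by
          simp only [ballF]; ext y; simp; try tauto
        have hw : ballW [a,a,a,d] = 6 := by
          rw [ballW, e, Finset.sum_insert (by simp [had, Ne.symm had]), Finset.sum_singleton]
          simp [Wt, had, Ne.symm had]
        have := filt2 a a (fun a' => tc a' [a,a,a,d] = 1)
        omega
    · by_cases hcd : c = d
      · subst hcd
        -- aacc
        have e : ballF [a,a,c,c] = {[a,c,c],[a,a,c]} := by
          simp only [ballF]; ext y; simp; try tauto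
        have hw : ballW [a,a,c,c] = 4 := by
          rw [ballW, e, Finset.sum_insert (by simp [hac, Ne.symm hac]), Finset.sum_singleton]
          simp [Wt, hac, Ne.symm hac]
        have hta : ¬ tc a [a,a,c,c] = 1 := by
          rw [tc, e]
          simp only [Finset.filter_insert, Finset.filter_singleton]
          simp [Finset.filter_insert, Finset.filter_singleton, outA, hac, Ne.symm hac]
        have h0 := filt0 (P := fun a' => tc a' [a,a,c,c] = 1) hta hta
        omega
      · by_cases had : a = d
        · subst had
          -- aaca
          have e : ballF [a,a,c,a] = {[a,c,a],[a,a,a],[a,a,c]} := by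
            simp only [ballF]; ext y; simp; try tauto
          have hw : ballW [a,a,c,a] = 7 := by
            rw [ballW, e, Finset.sum_insert (by simp [hac, Ne.symm hac]),
              Finset.sum_insert (by simp [hac, Ne.symm hac]), Finset.sum_singleton]
            simp [Wt, hac, Ne.symm hac]
          have := filt2 a a (fun a' => tc a' [a,a,c,a] = 1)
          omega
        · -- aacd
          have e : ballF [a,a,c,d] = {[a,c,d],[a,a,d],[a,a,c]} := by
            simp only [ballF]; ext y; simp; try tauto
          have hw : ballW [a,a,c,d] = 5 := by
            rw [ballW, e, Finset.sum_insert (by simp [hac, hcd, Ne.symm hac]),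
              Finset.sum_insert (by simp [hcd, Ne.symm hcd, had, Ne.symm had]), Finset.sum_singleton]
            simp [Wt, hac, Ne.symm hac, hcd, Ne.symm hcd, had, Ne.symm had]
          have h1 : (({a, a} : Finset ℕ).filter (fun a' => tc a' [a,a,c,d] = 1)).card ≤ 1 := by
            refine le_trans (Finset.card_filter_le _ _) ?_
            simp
          omega
  · by_cases hbc : b = c
    · subst hbc
      by_cases hbd : b = d
      · subst hbd
        -- abbb
        have e : ballF [a,b,b,b] = {[b,b,b],[a,b,b]} := by
          simp only [ballF]; ext y; simp [hab]; try tauto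
        have hw : ballW [a,b,b,b] = 6 := by
          rw [ballW, e, Finset.sum_insert (by simp [hab, Ne.symm hab]), Finset.sum_singleton]
          simp [Wt, hab, Ne.symm hab]
        have := filt2 a b (fun a' => tc a' [a,b,b,b] = 1)
        omega
      · by_cases had : a = d
        · subst had
          -- abba
          have e : ballF [a,b,b,a] = {[b,b,a],[a,b,a],[a,b,b]} := by
            simp only [ballF]; ext y; simp [hab]; try tauto
          have hw : ballW [a,b,b,a] = 5 := by
            rw [ballW, e, Finset.sum_insert (by simp [hab, Ne.symm hab]),
              Finset.sum_insert (by simp [hab, Ne.symm hab]), Finset.sum_singleton]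
            simp [Wt, hab, Ne.symm hab]
          have htb : ¬ tc b [a,b,b,a] = 1 := by
            rw [tc, e]
            simp only [Finset.filter_insert, Finset.filter_singleton]
            simp [Finset.filter_insert, Finset.filter_singleton, outA, hab, Ne.symm hab]
          have h1 := filt1 (P := fun a' => tc a' [a,b,b,a] = 1) a htb
          omega
        · -- abbd
          have e : ballF [a,b,b,d] = {[b,b,d],[a,b,d],[a,b,b]} := by
            simp only [ballF]; ext y; simp [hab]; try tauto
          have hw : ballW [a,b,b,d] = 5 := by
            rw [ballW, e, Finset.sum_insert (by simp [hab, Ne.symm hab, hbd, Ne.symm hbd]),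
              Finset.sum_insert (by simp [hbd, Ne.symm hbd, Ne.symm hab]), Finset.sum_singleton]
            simp [Wt, hab, hbd, Ne.symm hab, Ne.symm hbd]
          have htb : ¬ tc b [a,b,b,d] = 1 := by
            rw [tc, e]
            simp only [Finset.filter_insert, Finset.filter_singleton]
            simp [Finset.filter_insert, Finset.filter_singleton, outA, hab, Ne.symm hab, hbd]
          have h1 := filt1 (P := fun a' => tc a' [a,b,b,d] = 1) a htb
          omega
    · by_cases hcd : c = d
      · subst hcd
        by_cases hac : a = c
        · subst hac
          -- abaa
          have e : ballF [a,b,a,a] = {[b,a,a],[a,a,a],[a,b,a]} := by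
            simp only [ballF]; ext y; simp [hab]; try tauto
          have hw : ballW [a,b,a,a] = 7 := by
            rw [ballW, e, Finset.sum_insert (by simp [hab, Ne.symm hab]),
              Finset.sum_insert (by simp [hab, Ne.symm hab]), Finset.sum_singleton]
            simp [Wt, hab, Ne.symm hab]
          have := filt2 a b (fun a' => tc a' [a,b,a,a] = 1)
          omega
        · -- abcc
          have e : ballF [a,b,c,c] = {[b,c,c],[a,c,c],[a,b,c]} := by
            simp only [ballF]; ext y; simp [hab]; try tauto
          have hw : ballW [a,b,c,c] = 5 := by
            rw [ballW, e, Finset.sum_insert (by simp [hab, Ne.symm hab, hbc, Ne.symm hbc]),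
              Finset.sum_insert (by simp [hbc, Ne.symm hbc, hac, Ne.symm hac]), Finset.sum_singleton]
            simp [Wt, hab, hbc, hac, Ne.symm hbc, Ne.symm hac, Ne.symm hab]
          have htb : ¬ tc b [a,b,c,c] = 1 := by
            rw [tc, e]
            simp only [Finset.filter_insert, Finset.filter_singleton]
            simp [Finset.filter_insert, Finset.filter_singleton, outA, hab, Ne.symm hab, hbc,
              Ne.symm hbc, hac, Ne.symm hac]
          have h1 := filt1 (P := fun a' => tc a' [a,b,c,c] = 1) a htb
          omega
      · by_cases hac : a = c
        · subst hac
          by_cases hbd : b = d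
          · subst hbd
            -- abab
            have e : ballF [a,b,a,b] = {[b,a,b],[a,a,b],[a,b,b],[a,b,a]} := by
              simp only [ballF]
            have hw : ballW [a,b,a,b] = 6 := by
              rw [ballW, e, Finset.sum_insert (by simp [hab, Ne.symm hab]),
                Finset.sum_insert (by simp [hab, Ne.symm hab]),
                Finset.sum_insert (by simp [hab, Ne.symm hab]), Finset.sum_singleton]
              simp [Wt, hab, Ne.symm hab]
            have := filt2 a b (fun a' => tc a' [a,b,a,b] = 1)
            omega
          · -- abad
            have e : ballF [a,b,a,d] = {[b,a,d],[a,a,d],[a,b,d],[a,b,a]} := by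
              simp only [ballF]
            have hw : ballW [a,b,a,d] = 5 := by
              rw [ballW, e, Finset.sum_insert (by simp [hab, Ne.symm hab]),
                Finset.sum_insert (by simp [hab, Ne.symm hab, hcd]),
                Finset.sum_insert (by simp [hcd, Ne.symm hcd, hbd, Ne.symm hbd]), Finset.sum_singleton]
              simp [Wt, hab, Ne.symm hab, hcd, hbd, Ne.symm hcd, Ne.symm hbd]
            have htb : ¬ tc b [a,b,a,d] = 1 := by
              rw [tc, e]
              simp only [Finset.filter_insert, Finset.filter_singleton]
              simp [Finset.filter_insert, Finset.filter_singleton, outA, hab, Ne.symm hab,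
                hcd, hbd, Ne.symm hbd]
            have h1 := filt1 (P := fun a' => tc a' [a,b,a,d] = 1) a htb
            omega
        · by_cases hbd : b = d
          · subst hbd
            -- abcb
            have e : ballF [a,b,c,b] = {[b,c,b],[a,c,b],[a,b,b],[a,b,c]} := by
              simp only [ballF]
            have hw : ballW [a,b,c,b] = 5 := by
              rw [ballW, e, Finset.sum_insert (by simp [hab, Ne.symm hab, hbc, Ne.symm hbc]),
                Finset.sum_insert (by simp [hbc, Ne.symm hbc, hac]),
                Finset.sum_insert (by simp [hbc, Ne.symm hbc, hcd]), Finset.sum_singleton]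
              simp [Wt, hab, Ne.symm hab, hbc, Ne.symm hbc, hac, Ne.symm hac, hcd]
            have hta : ¬ tc a [a,b,c,b] = 1 := by
              rw [tc, e]
              simp only [Finset.filter_insert, Finset.filter_singleton]
              simp [Finset.filter_insert, Finset.filter_singleton, outA, hab, Ne.symm hab,
                hbc, Ne.symm hbc, hac, Ne.symm hac]
            have h1 := filt1' (P := fun a' => tc a' [a,b,c,b] = 1) b hta
            omega
          · by_cases had : a = d
            · subst had
              -- abca
              have e : ballF [a,b,c,a] = {[b,c,a],[a,c,a],[a,b,a],[a,b,c]} := by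
                simp only [ballF]
              have hw : ballW [a,b,c,a] = 4 := by
                rw [ballW, e, Finset.sum_insert (by simp [hab, Ne.symm hab, hbc]),
                  Finset.sum_insert (by simp [hbc, Ne.symm hbc, hac, Ne.symm hac]),
                  Finset.sum_insert (by simp [hcd, hac, Ne.symm hac]), Finset.sum_singleton]
                simp [Wt, hab, Ne.symm hab, hbc, Ne.symm hbc, hac, Ne.symm hac, hcd]
              have hta : ¬ tc a [a,b,c,a] = 1 := by
                rw [tc, e]
                simp only [Finset.filter_insert, Finset.filter_singleton]
                simp [Finset.filter_insert, Finset.filter_singleton, outA, hab, Ne.symm hab,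
                  hbc, Ne.symm hbc, hac, Ne.symm hac, hcd]
              have htb : ¬ tc b [a,b,c,a] = 1 := by
                rw [tc, e]
                simp only [Finset.filter_insert, Finset.filter_singleton]
                simp [Finset.filter_insert, Finset.filter_singleton, outA, hab, Ne.symm hab,
                  hbc, Ne.symm hbc, hac, Ne.symm hac, hcd]
              have h0 := filt0 (P := fun a' => tc a' [a,b,c,a] = 1) hta htb
              omega
            · -- abcd all distinct
              have e : ballF [a,b,c,d] = {[b,c,d],[a,c,d],[a,b,d],[a,b,c]} := by
                simp only [ballF]
              have hw : ballW [a,b,c,d] = 4 := by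
                rw [ballW, e, Finset.sum_insert (by simp [hab, Ne.symm hab, hbc]),
                  Finset.sum_insert (by simp [hbc, Ne.symm hbc, hcd]),
                  Finset.sum_insert (by simp [hcd, Ne.symm hcd, had, Ne.symm had]), Finset.sum_singleton]
                simp [Wt, hab, hbc, hcd, hac, hbd, had, Ne.symm hab, Ne.symm hbc, Ne.symm hcd,
                  Ne.symm hac, Ne.symm hbd, Ne.symm had]
              have hta : ¬ tc a [a,b,c,d] = 1 := by
                rw [tc, e]
                simp only [Finset.filter_insert, Finset.filter_singleton]
                simp [Finset.filter_insert, Finset.filter_singleton, outA, hab, Ne.symm hab,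
                  hbc, Ne.symm hbc, hac, Ne.symm hac, hcd, Ne.symm hcd, hbd, Ne.symm hbd,
                  had, Ne.symm had]
              have htb : ¬ tc b [a,b,c,d] = 1 := by
                rw [tc, e]
                simp only [Finset.filter_insert, Finset.filter_singleton]
                simp [Finset.filter_insert, Finset.filter_singleton, outA, hab, Ne.symm hab,
                  hbc, Ne.symm hbc, hac, Ne.symm hac, hcd, Ne.symm hcd, hbd, Ne.symm hbd,
                  had, Ne.symm had]
              have h0 := filt0 (P := fun a' => tc a' [a,b,c,d] = 1) hta htb
              omega

lemma ballF_sub_V3 {q a b c d : ℕ} (ha : a < q) (hb : b < q) (hc : c < q) (hd : d < q) :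
    ballF [a, b, c, d] ⊆ V3 q := by
  intro y hy
  simp only [ballF, Finset.mem_insert, Finset.mem_singleton] at hy
  rcases hy with rfl | rfl | rfl | rfl
  · exact mem_V3 hb hc hd
  · exact mem_V3 ha hc hd
  · exact mem_V3 ha hb hd
  · exact mem_V3 ha hb hc

theorem stmt0 (q : ℕ) (hq : 1 ≤ q) (hqeven : Even q)
    (C : Set (List ℕ)) (hC : ∀ x ∈ C, IsWord q 4 x)
    (hcorr : CorrectsDeletions 1 C) :
    C.ncard ≤ q ^ 2 * (q + 2) / 4 := by
  classical
  -- representation of codewords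
  have hrep : ∀ x ∈ C, ∃ a b c d : ℕ, x = [a, b, c, d] ∧ a < q ∧ b < q ∧ c < q ∧ d < q := by
    intro x hx
    obtain ⟨hlen, hlt⟩ := hC x hx
    rcases x with _ | ⟨a, x⟩; · simp at hlen
    rcases x with _ | ⟨b, x⟩; · simp at hlen
    rcases x with _ | ⟨c, x⟩; · simp at hlen
    rcases x with _ | ⟨d, x⟩; · simp at hlen
    rcases x with _ | ⟨e, x⟩
    · exact ⟨a, b, c, d, rfl, hlt a (by simp), hlt b (by simp), hlt c (by simp),
        hlt d (by simp)⟩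
    · simp at hlen
  -- finiteness
  have hfin : C.Finite := by
    have hsub : C ⊆ ↑(((Finset.range q ×ˢ Finset.range q) ×ˢ Finset.range q ×ˢ Finset.range q).image
        (fun p => [p.1.1, p.1.2, p.2.1, p.2.2])) := by
      intro x hx
      obtain ⟨a, b, c, d, rfl, ha, hb, hc, hd⟩ := hrep x hx
      exact Finset.mem_coe.2 (Finset.mem_image.2 ⟨((a, b), (c, d)),
        by simp [Finset.mem_product, Finset.mem_range, ha, hb, hc, hd], rfl⟩)
    exact Set.Finite.subset (Finset.finite_toSet _) hsub
  set Cf := hfin.toFinset with hCfdef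
  have hmemCf : ∀ x, x ∈ Cf ↔ x ∈ C := fun x => hfin.mem_toFinset
  have hncard : C.ncard = Cf.card := Set.ncard_eq_toFinset_card C hfin
  -- pairwise disjoint balls
  have hdisjS : (↑Cf : Set (List ℕ)).PairwiseDisjoint ballF := by
    intro x hx y hy hxy
    have hx' : x ∈ C := (hmemCf x).1 hx
    have hy' : y ∈ C := (hmemCf y).1 hy
    have hd := hcorr hx' hy' hxy
    obtain ⟨a, b, c, d, rfl, -⟩ := hrep x hx'
    obtain ⟨a', b', c', d', rfl, -⟩ := hrep y hy'
    rw [del_eq, del_eq] at hd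
    exact Finset.disjoint_coe.1 hd
  set S := Cf.biUnion ballF with hSdef
  have hballV3 : ∀ x ∈ Cf, ballF x ⊆ V3 q := by
    intro x hx
    obtain ⟨a, b, c, d, rfl, ha, hb, hc, hd⟩ := hrep x ((hmemCf x).1 hx)
    exact ballF_sub_V3 ha hb hc hd
  have hSV3 : S ⊆ V3 q := by
    intro y hy
    obtain ⟨x, hx, hyx⟩ := Finset.mem_biUnion.1 hy
    exact hballV3 x hx hyx
  have hsumS : ∑ y ∈ S, Wt y = ∑ x ∈ Cf, ballW x := Finset.sum_biUnion hdisjS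
  -- per-letter quantities
  set sa : ℕ → ℕ := fun a => (Cf.filter (fun x => tc a x = 1)).card with hsadef
  set ua : ℕ → ℕ := fun a => ((Aa q a) \ S).card with huadef
  -- per-letter parity
  have hper : ∀ a ∈ Finset.range q, 1 ≤ sa a + ua a := by
    intro a ha
    have haq : a < q := Finset.mem_range.1 ha
    -- card of covered part
    have hinter : Aa q a ∩ S = Cf.biUnion (fun x => Aa q a ∩ ballF x) := by
      ext y
      simp only [Finset.mem_inter, Finset.mem_biUnion, hSdef]
      tauto
    have hcardinter : (Aa q a ∩ S).card = ∑ x ∈ Cf, tc a x := by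
      rw [hinter, Finset.card_biUnion]
      · refine Finset.sum_congr rfl fun x hx => ?_
        obtain ⟨a', b', c', d', rfl, ha', hb', hc', hd'⟩ := hrep x ((hmemCf x).1 hx)
        rw [Aa_inter_ball hb' hc']
        rfl
      · intro x hx y hy hxy
        exact (hdisjS (Finset.mem_coe.2 hx) (Finset.mem_coe.2 hy) hxy).mono
          inf_le_right inf_le_right
    have hsplitcard : (Aa q a ∩ S).card + ua a = q - 1 := by
      rw [huadef]
      simpa using (Finset.card_inter_add_card_sdiff (Aa q a) S).trans (Aa_card haq)
    -- split the sum by tc = 1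
    have hsum_split : ∑ x ∈ Cf, tc a x
        = sa a + ∑ x ∈ Cf.filter (fun x => ¬ tc a x = 1), tc a x := by
      rw [← Finset.sum_filter_add_sum_filter_not Cf (fun x => tc a x = 1) (fun x => tc a x)]
      congr 1
      show _ = (Cf.filter (fun x => tc a x = 1)).card
      rw [Finset.card_eq_sum_ones]
      exact Finset.sum_congr rfl fun x hx => (Finset.mem_filter.1 hx).2
    have heven : ∑ x ∈ Cf.filter (fun x => ¬ tc a x = 1), tc a x
        = 2 * ∑ x ∈ Cf.filter (fun x => ¬ tc a x = 1), (tc a x / 2) := by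
      rw [Finset.mul_sum]
      refine Finset.sum_congr rfl fun x hx => ?_
      obtain ⟨hxC, hx1⟩ := Finset.mem_filter.1 hx
      obtain ⟨a', b', c', d', rfl, -⟩ := hrep x ((hmemCf x).1 hxC)
      have h2 := tc_le_two a a' b' c' d'
      omega
    obtain ⟨n, hn⟩ := hqeven
    omega
  have hqle : q ≤ ∑ a ∈ Finset.range q, (sa a + ua a) := by
    calc q = ∑ _a ∈ Finset.range q, 1 := by simp
      _ ≤ _ := Finset.sum_le_sum hper
  -- key bound summed
  have hkey : ∀ x ∈ Cf, 4 + ((Finset.range q).filter (fun a => tc a x = 1)).card ≤ ballW x := by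
    intro x hx
    obtain ⟨a, b, c, d, rfl, -⟩ := hrep x ((hmemCf x).1 hx)
    have hsub : (Finset.range q).filter (fun a' => tc a' [a, b, c, d] = 1)
        ⊆ ({a, b} : Finset ℕ).filter (fun a' => tc a' [a, b, c, d] = 1) := by
      intro z hz
      obtain ⟨hzr, hz1⟩ := Finset.mem_filter.1 hz
      refine Finset.mem_filter.2 ⟨?_, hz1⟩
      rcases tc_outer hz1 with rfl | rfl <;> simp
    have h1 := key a b c d
    have h2 := Finset.card_le_card hsub
    omega
  have hsum_key : 4 * Cf.card + ∑ a ∈ Finset.range q, sa a ≤ ∑ x ∈ Cf, ballW x := by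
    have h1 : ∑ x ∈ Cf, (4 + ((Finset.range q).filter (fun a => tc a x = 1)).card)
        ≤ ∑ x ∈ Cf, ballW x := Finset.sum_le_sum hkey
    have h2 : ∑ x ∈ Cf, (4 + ((Finset.range q).filter (fun a => tc a x = 1)).card)
        = 4 * Cf.card + ∑ x ∈ Cf, ((Finset.range q).filter (fun a => tc a x = 1)).card := by
      rw [Finset.sum_add_distrib, Finset.sum_const, smul_eq_mul, mul_comm]
    have h3 : ∑ x ∈ Cf, ((Finset.range q).filter (fun a => tc a x = 1)).card
        = ∑ a ∈ Finset.range q, sa a := by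
      have e1 : ∀ x, ((Finset.range q).filter (fun a => tc a x = 1)).card
          = ∑ a ∈ Finset.range q, if tc a x = 1 then 1 else 0 := by
        intro x; rw [Finset.card_filter]
      have e2 : ∀ a, sa a = ∑ x ∈ Cf, if tc a x = 1 then 1 else 0 := by
        intro a
        show (Cf.filter (fun x => tc a x = 1)).card = _
        rw [Finset.card_filter]
      simp only [e1, e2]
      exact Finset.sum_comm
    omega
  -- uncovered weight
  have hua_sum : ∑ a ∈ Finset.range q, ua a ≤ ∑ y ∈ V3 q \ S, Wt y := by
    set U := (Finset.range q).biUnion (fun a => Aa q a \ S) with hUdef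
    have hUcard : U.card = ∑ a ∈ Finset.range q, ua a := by
      rw [hUdef, Finset.card_biUnion]
      intro x hx y hy hxy
      exact (Aa_disj hxy).mono sdiff_le sdiff_le
    have hUsub : U ⊆ V3 q \ S := by
      intro y hy
      obtain ⟨a, ha, hy'⟩ := Finset.mem_biUnion.1 hy
      obtain ⟨hyA, hyS⟩ := Finset.mem_sdiff.1 hy'
      exact Finset.mem_sdiff.2 ⟨Aa_sub (Finset.mem_range.1 ha) hyA, hyS⟩
    calc ∑ a ∈ Finset.range q, ua a = U.card := hUcard.symm
      _ = ∑ y ∈ U, 1 := by rw [Finset.card_eq_sum_ones]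
      _ ≤ ∑ y ∈ U, Wt y := by
          refine Finset.sum_le_sum fun y hy => ?_
          obtain ⟨a, _, hy'⟩ := Finset.mem_biUnion.1 hy
          rw [Wt_Aa (Finset.mem_sdiff.1 hy').1]
      _ ≤ ∑ y ∈ V3 q \ S, Wt y := Finset.sum_le_sum_of_subset hUsub
  have htotal : ∑ y ∈ V3 q \ S, Wt y + ∑ y ∈ S, Wt y = q * (q + 1) ^ 2 := by
    rw [Finset.sum_sdiff hSV3, sum_V3_Wt]
  -- final arithmetic
  have hsum_sa_ua : ∑ a ∈ Finset.range q, (sa a + ua a)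
      = ∑ a ∈ Finset.range q, sa a + ∑ a ∈ Finset.range q, ua a :=
    Finset.sum_add_distrib
  have hfinal : 4 * Cf.card + q ≤ q * (q + 1) ^ 2 := by omega
  have hexp : q * (q + 1) ^ 2 = q ^ 2 * (q + 2) + q := by ring
  rw [hncard, Nat.le_div_iff_mul_le (by norm_num : 0 < 4)]
  omega
end

section
/- (Substitution lemma, general version.) Let C ⊆ B_q^n be a code capable of correcting s deletions. If A ⊆ C, B ⊆ B_q^n, ⌊B⌋_s ⊆ ⌊A⌋_s (where ⌊X⌋_s = ⋃_{x∈X} ⌊x⌋_s), and B is itself capable of correcting s deletions, then (C \ A) ∪ B is capable of correcting s deletions. -/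
theorem stmt3 (q n s : ℕ) (C A B : Set (List ℕ)) (hC : ∀ z ∈ C, IsWord q n z)
    (hcorr : CorrectsDeletions s C) (hA : A ⊆ C) (hB : ∀ z ∈ B, IsWord q n z)
    (hsub : (⋃ x ∈ B, Deletions s x) ⊆ ⋃ x ∈ A, Deletions s x)
    (hBcorr : CorrectsDeletions s B) :
    CorrectsDeletions s ((C \ A) ∪ B) := by
  -- key: Deletions of x ∈ C \ A is disjoint from Deletions of y ∈ B
  have key : ∀ x ∈ C \ A, ∀ y ∈ B, Disjoint (Deletions s x) (Deletions s y) := by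
    intro x hx y hy
    rw [Set.disjoint_left]
    intro z hzx hzy
    have hz : z ∈ ⋃ w ∈ A, Deletions s w := by
      apply hsub
      exact Set.mem_biUnion hy hzy
    obtain ⟨a, ha, hza⟩ := Set.mem_iUnion₂.mp hz
    have hxa : x ≠ a := fun h => hx.2 (h ▸ ha)
    exact Set.disjoint_left.mp (hcorr hx.1 (hA ha) hxa) hzx hza
  intro x hx y hy hxy
  rcases hx with hx | hx <;> rcases hy with hy | hy
  · exact hcorr hx.1 hy.1 hxy
  · exact key x hx y hy
  · exact (key y hy x hx).symm
  · exact hBcorr hx hy hxy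
end

section
/- Let x = (a₁,a₂,a₃,a₄) ∈ B_q^4 be a word with pairwise distinct letters. Then the six-word code ⟨x⟩_A = {(a₁,a₂,a₃,a₄), (a₁,a₄,a₃,a₂), (a₂,a₄,a₁,a₃), (a₃,a₄,a₁,a₂), (a₃,a₂,a₁,a₄), (a₄,a₂,a₃,a₁)} is capable of correcting single deletions. -/
/-- The six-word code `⟨x⟩_A` generated by a word `x = (a₁,a₂,a₃,a₄)`
with pairwise distinct letters. -/
def codeA (a1 a2 a3 a4 : ℕ) : Set (List ℕ) :=
  {[a1, a2, a3, a4], [a1, a4, a3, a2], [a2, a4, a1, a3],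
   [a3, a4, a1, a2], [a3, a2, a1, a4], [a4, a2, a3, a1]}

/-- The eight-word code `⟨x⟩_B` generated by a word `x = (a₁,a₂,a₃,a₄)`
with pairwise distinct letters. -/
def codeB (a1 a2 a3 a4 : ℕ) : Set (List ℕ) :=
  {[a1, a4, a3, a2], [a2, a4, a1, a3], [a3, a2, a1, a4], [a4, a2, a3, a1],
   [a1, a3, a4, a1], [a2, a3, a4, a2], [a3, a1, a2, a3], [a4, a1, a2, a4]}

set_option maxHeartbeats 1000000

lemma sub3_s4 {z : List ℕ} {b1 b2 b3 b4 : ℕ} (h : z.Sublist [b1,b2,b3,b4]) (hl : z.length = 3) :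
    z = [b2,b3,b4] ∨ z = [b1,b3,b4] ∨ z = [b1,b2,b4] ∨ z = [b1,b2,b3] := by
  have := List.mem_sublists.2 h
  simp [List.sublists] at this
  rcases this with h|h|h|h|h|h|h|h|h|h|h|h|h|h|h|h <;> subst h <;> simp_all

theorem stmt4 (q a1 a2 a3 a4 : ℕ)
    (hword : IsWord q 4 [a1, a2, a3, a4])
    (hdist : [a1, a2, a3, a4].Nodup) :
    CorrectsDeletions 1 (codeA a1 a2 a3 a4) := by
  simp only [List.nodup_cons, List.mem_cons, List.not_mem_nil, List.nodup_nil] at hdist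
  obtain ⟨h12, h13, h14, h23, h24, h34⟩ :
      a1 ≠ a2 ∧ a1 ≠ a3 ∧ a1 ≠ a4 ∧ a2 ≠ a3 ∧ a2 ≠ a4 ∧ a3 ≠ a4 := by tauto
  intro x hx y hy hxy
  rw [Set.disjoint_left]
  rintro z ⟨hs1, hl1⟩ ⟨hs2, hl2⟩
  simp only [codeA, Set.mem_insert_iff, Set.mem_singleton_iff] at hx hy
  rcases hx with hx|hx|hx|hx|hx|hx <;> rcases hy with hy|hy|hy|hy|hy|hy <;>
    subst hx <;> subst hy <;>
    first
    | exact hxy rfl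
    | (have hl : z.length = 3 := by simpa using hl1
       rcases sub3_s4 hs1 hl with h|h|h|h <;> subst h <;>
         rcases sub3_s4 hs2 rfl with h|h|h|h <;>
         simp only [List.cons.injEq, and_true] at h <;> omega)
end

section
/- Let x = (a₁,a₂,a₃,a₄) ∈ B_q^4 be a word with pairwise distinct letters. Then the eight-word code ⟨x⟩_B = {(a₁,a₄,a₃,a₂), (a₂,a₄,a₁,a₃), (a₃,a₂,a₁,a₄), (a₄,a₂,a₃,a₁), (a₁,a₃,a₄,a₁), (a₂,a₃,a₄,a₂), (a₃,a₁,a₂,a₃), (a₄,a₁,a₂,a₄)} is capable of correcting single deletions. -/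
lemma del4 (b1 b2 b3 b4 : ℕ) :
    Deletions 1 [b1,b2,b3,b4] = {[b2,b3,b4],[b1,b3,b4],[b1,b2,b4],[b1,b2,b3]} := by
  ext y
  simp only [Deletions, Set.mem_setOf_eq, Set.mem_insert_iff, Set.mem_singleton_iff]
  constructor
  · rintro ⟨hs, hl⟩
    have h := List.mem_sublists.2 hs
    simp [List.sublists] at h
    rcases h with h|h|h|h|h|h|h|h|h|h|h|h|h|h|h|h <;> subst h <;> simp_all
  · rintro (rfl|rfl|rfl|rfl) <;> simp [List.Sublist.cons, List.Sublist.cons₂]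

set_option maxHeartbeats 2000000 in
theorem stmt5 (q a1 a2 a3 a4 : ℕ)
    (hword : IsWord q 4 [a1, a2, a3, a4])
    (hdist : [a1, a2, a3, a4].Nodup) :
    CorrectsDeletions 1 (codeB a1 a2 a3 a4) := by
  simp only [List.nodup_cons, List.mem_cons, List.not_mem_nil, or_false, not_or,
    List.nodup_nil, and_true] at hdist
  obtain ⟨⟨h12, h13, h14⟩, ⟨h23, h24⟩, h34⟩ := hdist
  intro x hx y hy hne
  simp only [codeB, Set.mem_insert_iff, Set.mem_singleton_iff] at hx hy
  rcases hx with rfl|rfl|rfl|rfl|rfl|rfl|rfl|rfl <;>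
    rcases hy with rfl|rfl|rfl|rfl|rfl|rfl|rfl|rfl <;>
  first
    | exact absurd rfl hne
    | (rw [del4, del4, Set.disjoint_left]
       rintro z (rfl|rfl|rfl|rfl) h <;>
       · simp only [Set.mem_insert_iff, Set.mem_singleton_iff, List.cons.injEq,
           and_true] at h
         rcases h with h|h|h|h <;> omega)
end

section
/- (Reiss.) For every positive integer n, the n(2n−1) unordered pairs of elements of a 2n-element set can be partitioned into 2n−1 sets S₁, S₂, …, S_{2n−1} such that each S_i consists of n pairwise disjoint pairs (equivalently, the complete graph K_{2n} admits a proper edge coloring with 2n−1 colors in which each color class is a perfect matching). -/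
section Aux

variable {m : ℕ}

/-- partner of `x` in round `i` -/
def prt (i : ZMod m) : (ZMod m ⊕ Unit) → (ZMod m ⊕ Unit)
  | Sum.inr _ => Sum.inl i
  | Sum.inl a => if a = i then Sum.inr () else Sum.inl (2 * i - a)

lemma prt_invol (i : ZMod m) (x : ZMod m ⊕ Unit) : prt i (prt i x) = x := by
  rcases x with a | u
  · by_cases h : a = i
    · simp [prt, h]
    · have h2 : 2 * i - a ≠ i := by
        intro hh
        exact h (by linear_combination -hh)
      simp [prt, h, h2]
  · simp [prt]

lemma prt_ne {inv2 : ZMod m} (h2 : (2 : ZMod m) * inv2 = 1) (i : ZMod m)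
    (x : ZMod m ⊕ Unit) : prt i x ≠ x := by
  rcases x with a | u
  · by_cases h : a = i
    · simp [prt, h]
    · simp only [prt, if_neg h]
      intro hh
      have hh' : 2 * i - a = a := by injection hh
      exact h (show a = i by linear_combination (i - a) * h2 - inv2 * hh')
  · simp [prt]

/-- the round in which the pair `{a,b}` appears -/
def rnd (inv2 : ZMod m) : (ZMod m ⊕ Unit) → (ZMod m ⊕ Unit) → ZMod m
  | Sum.inr _, Sum.inl b => b
  | Sum.inl a, Sum.inr _ => a
  | Sum.inl a, Sum.inl b => inv2 * (a + b)
  | _, _ => 0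

lemma prt_eq_iff {inv2 : ZMod m} (h2 : (2 : ZMod m) * inv2 = 1)
    (i : ZMod m) {a b : ZMod m ⊕ Unit} (hab : a ≠ b) :
    prt i a = b ↔ i = rnd inv2 a b := by
  rcases a with a | u <;> rcases b with b | v
  · have hab' : a ≠ b := fun h => hab (by rw [h])
    show _ ↔ i = inv2 * (a + b)
    constructor
    · intro h
      by_cases ha : a = i
      · simp [prt, ha] at h
      · simp only [prt, if_neg ha] at h
        have h' : 2 * i - a = b := by injection h
        linear_combination inv2 * h' - i * h2
    · intro h
      have ha : a ≠ i := by
        intro hh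
        have ha2 : a = inv2 * (a + b) := hh.trans h
        exact hab' (by linear_combination 2 * ha2 + (a + b) * h2)
      simp only [prt, if_neg ha]
      congr 1
      rw [h]
      linear_combination (a + b) * h2
  · show _ ↔ i = a
    constructor
    · intro h
      by_cases ha : a = i
      · exact ha.symm
      · simp [prt, ha] at h
    · intro h
      simp [prt, h.symm]
  · show _ ↔ i = b
    simp only [prt]
    constructor
    · intro h; injection h
    · intro h; rw [h]
  · exact absurd (congrArg Sum.inr (Subsingleton.elim u v)) hab


def fac [NeZero m] (i : ZMod m) : Finset (Finset (ZMod m ⊕ Unit)) :=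
  Finset.univ.image (fun x => {x, prt i x})

lemma pair_eq_of_mem (i : ZMod m) {x z : ZMod m ⊕ Unit}
    (hz : z ∈ ({x, prt i x} : Finset (ZMod m ⊕ Unit))) :
    ({x, prt i x} : Finset (ZMod m ⊕ Unit)) = {z, prt i z} := by
  rcases Finset.mem_insert.1 hz with h | h
  · rw [h]
  · rw [Finset.mem_singleton.1 h, prt_invol, Finset.pair_comm]

lemma mem_fac_iff [NeZero m] (i : ZMod m) {a b : ZMod m ⊕ Unit} (hab : a ≠ b) :
    ({a, b} : Finset (ZMod m ⊕ Unit)) ∈ fac i ↔ prt i a = b := by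
  constructor
  · intro h
    obtain ⟨x, -, hx⟩ := Finset.mem_image.1 h
    have ha : a ∈ ({x, prt i x} : Finset (ZMod m ⊕ Unit)) := by rw [hx]; simp
    rw [pair_eq_of_mem i ha] at hx
    have hb : b ∈ ({a, prt i a} : Finset (ZMod m ⊕ Unit)) := by rw [hx]; simp
    rcases Finset.mem_insert.1 hb with h | h
    · exact absurd h.symm hab
    · exact (Finset.mem_singleton.1 h).symm
  · intro h
    exact Finset.mem_image.2 ⟨a, Finset.mem_univ _, by rw [h]⟩

lemma fac_disj [NeZero m] (i : ZMod m) {p q : Finset (ZMod m ⊕ Unit)}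
    (hp : p ∈ fac i) (hq : q ∈ fac i) (hne : p ≠ q) : Disjoint p q := by
  rw [Finset.disjoint_left]
  intro z hzp hzq
  obtain ⟨x, -, hx⟩ := Finset.mem_image.1 hp
  obtain ⟨y, -, hy⟩ := Finset.mem_image.1 hq
  subst hx hy
  exact hne ((pair_eq_of_mem i hzp).trans (pair_eq_of_mem i hzq).symm)

lemma fac_card [NeZero m] {inv2 : ZMod m} (h2 : (2 : ZMod m) * inv2 = 1) (i : ZMod m) :
    2 * (fac i).card = m + 1 := by
  have hdisj : ∀ p ∈ fac i, ∀ q ∈ fac i, p ≠ q → Disjoint p q :=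
    fun p hp q hq => fac_disj i hp hq
  have hun : (fac i).biUnion (fun x => x) = Finset.univ := by
    apply Finset.eq_univ_of_forall
    intro x
    exact Finset.mem_biUnion.2 ⟨{x, prt i x},
      Finset.mem_image.2 ⟨x, Finset.mem_univ _, rfl⟩, by simp⟩
  have hcard := Finset.card_biUnion hdisj
  rw [hun, Finset.card_univ] at hcard
  have hβ : Fintype.card (ZMod m ⊕ Unit) = m + 1 := by simp [ZMod.card]
  rw [hβ] at hcard
  have h2' : ∀ p ∈ fac i, p.card = 2 := by
    intro p hp
    obtain ⟨x, -, hx⟩ := Finset.mem_image.1 hp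
    subst hx
    exact Finset.card_pair (Ne.symm (prt_ne h2 i x))
  rw [Finset.sum_congr rfl h2'] at hcard
  simp only [Finset.sum_const, smul_eq_mul] at hcard
  omega

end Aux

theorem stmt15 (n : ℕ) (hn : 0 < n) (α : Type*) [DecidableEq α]
    (X : Finset α) (hX : X.card = 2 * n) :
    ∃ S : Fin (2 * n - 1) → Finset (Finset α),
      (∀ i, ∀ p ∈ S i, p ⊆ X ∧ p.card = 2) ∧
      (∀ i, (S i).card = n) ∧
      (∀ i, ((S i : Set (Finset α))).Pairwise Disjoint) ∧
      (∀ p : Finset α, p ⊆ X → p.card = 2 → ∃! i, p ∈ S i) := by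
  set m := 2 * n - 1 with hm
  haveI : NeZero m := ⟨by omega⟩
  have hcop : Nat.Coprime 2 m := (Nat.prime_two.coprime_iff_not_dvd).2 (by omega)
  have hu : IsUnit (2 : ZMod m) := by
    have := (ZMod.isUnit_iff_coprime 2 m).2 hcop
    simpa using this
  obtain ⟨u, hu'⟩ := hu
  set inv2 : ZMod m := ↑u⁻¹ with hinv2
  have h2 : (2 : ZMod m) * inv2 = 1 := by rw [← hu']; exact u.mul_inv
  have g : (ZMod m ⊕ Unit) ≃ ↥X :=
    Fintype.equivOfCardEq (by simp [ZMod.card, hX]; omega)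
  set f : ZMod m ⊕ Unit → α := fun b => (g b : α) with hf
  have hfinj : Function.Injective f := fun a b h => g.injective (Subtype.ext h)
  have hfmem : ∀ b, f b ∈ X := fun b => (g b).2
  have hfsurj : ∀ x ∈ X, ∃ b, f b = x := fun x hx => ⟨g.symm ⟨x, hx⟩, by simp [hf]⟩
  refine ⟨fun i => (fac ((i : ℕ) : ZMod m)).image (Finset.image f), ?_, ?_, ?_, ?_⟩
  · intro i p hp
    obtain ⟨q, hq, rfl⟩ := Finset.mem_image.1 hp
    obtain ⟨x, -, rfl⟩ := Finset.mem_image.1 hq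
    constructor
    · intro y hy
      obtain ⟨b, -, rfl⟩ := Finset.mem_image.1 hy
      exact hfmem b
    · rw [Finset.card_image_of_injective _ hfinj]
      exact Finset.card_pair (Ne.symm (prt_ne h2 _ x))
  · intro i
    rw [Finset.card_image_of_injective _ (Finset.image_injective hfinj)]
    have := fac_card h2 (((i : ℕ) : ZMod m))
    omega
  · intro i p hp q hq hne
    rw [Finset.mem_coe] at hp hq
    obtain ⟨p', hp', rfl⟩ := Finset.mem_image.1 hp
    obtain ⟨q', hq', rfl⟩ := Finset.mem_image.1 hq
    have hne' : p' ≠ q' := fun h => hne (by rw [h])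
    exact Finset.disjoint_image hfinj |>.2 (fac_disj _ hp' hq' hne')
  · intro p hpX hp2
    obtain ⟨a, b, hab, rfl⟩ := Finset.card_eq_two.1 hp2
    obtain ⟨a', rfl⟩ := hfsurj a (hpX (by simp))
    obtain ⟨b', rfl⟩ := hfsurj b (hpX (by simp))
    have hab' : a' ≠ b' := fun h => hab (by rw [h])
    set j : ZMod m := rnd inv2 a' b' with hj
    have hjlt : j.val < 2 * n - 1 := ZMod.val_lt j
    refine ⟨⟨j.val, hjlt⟩, ?_, ?_⟩
    · refine Finset.mem_image.2 ⟨{a', b'}, ?_, by simp⟩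
      have hcast : ((j.val : ℕ) : ZMod m) = j := ZMod.natCast_rightInverse j
      rw [show (((⟨j.val, hjlt⟩ : Fin (2 * n - 1)) : ℕ) : ZMod m) = j from hcast]
      exact (mem_fac_iff j hab').2 ((prt_eq_iff h2 j hab').2 rfl)
    · intro i' hi'
      obtain ⟨q, hq, hqe⟩ := Finset.mem_image.1 hi'
      have hq' : q = {a', b'} := by
        apply Finset.image_injective hfinj
        rw [hqe]; simp
      subst hq'
      have hp : prt (((i' : ℕ) : ZMod m)) a' = b' := (mem_fac_iff _ hab').1 hq
      have hij : (((i' : ℕ) : ZMod m)) = j := (prt_eq_iff h2 _ hab').1 hp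
      apply Fin.ext
      have := ZMod.val_cast_of_lt (show (i' : ℕ) < m from i'.isLt)
      rw [hij] at this
      exact this.symm
end

section
/- Let q ≥ 4 be an even integer and let S be a Steiner quadruple system SQS(q) on B_q that satisfies the step property with respect to the order 0 < 1 < ⋯ < q−1. Then the number of quadruples in S of the form {2t, 2t+1, a, b} with 2t+1 < a and 2t+1 < b (for some t with 0 ≤ t ≤ q/2 − 1) equals q(q−2)/8. -/
/-- `S` is a Steiner quadruple system on `B_q = {0, 1, …, q-1}`: a collection of
4-element subsets of `B_q` such that every 3-element subset of `B_q` is contained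
in exactly one member of `S`. -/
def IsSQS (q : ℕ) (S : Set (Finset ℕ)) : Prop :=
  (∀ Q ∈ S, Q.card = 4 ∧ ∀ a ∈ Q, a < q) ∧
  (∀ T : Finset ℕ, T.card = 3 → (∀ a ∈ T, a < q) → ∃! Q, Q ∈ S ∧ T ⊆ Q)

/-- `S` satisfies the step property with respect to the total order
`L 0 < L 1 < ⋯ < L (q-1)` on `B_q`: every quadruple of the form
`{L (2t), L (2t+1), L a, L b}` in `S` has either `a < 2t` and `b < 2t`,
or `2t+1 < a` and `2t+1 < b`. -/
def StepProperty (q : ℕ) (L : ℕ → ℕ) (S : Set (Finset ℕ)) : Prop :=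
  ∀ t a b : ℕ, 2 * t + 1 < q → a < q → b < q →
    ({L (2 * t), L (2 * t + 1), L a, L b} : Finset ℕ) ∈ S →
    ((a < 2 * t ∧ b < 2 * t) ∨ (2 * t + 1 < a ∧ 2 * t + 1 < b))

/-- `L` enumerates a total order `L 0 < L 1 < ⋯ < L (q-1)` on `B_q`,
i.e. `L` restricted to `{0, …, q-1}` is a bijection onto `B_q`. -/
def IsOrderOn (q : ℕ) (L : ℕ → ℕ) : Prop :=
  (∀ i < q, L i < q) ∧ Set.InjOn L (Set.Iio q)

lemma triple_card (t c : ℕ) (hc : 2 * t + 1 < c) :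
    ({2 * t, 2 * t + 1, c} : Finset ℕ).card = 3 := by
  rw [Finset.card_insert_of_notMem (by simp; omega),
    Finset.card_insert_of_notMem (by simp; omega), Finset.card_singleton]

noncomputable def quad (S : Set (Finset ℕ)) (t c : ℕ) : Finset ℕ :=
  Classical.epsilon fun Q => Q ∈ S ∧ ({2 * t, 2 * t + 1, c} : Finset ℕ) ⊆ Q

lemma quad_mem {q : ℕ} {S : Set (Finset ℕ)} (hS : IsSQS q S) {t c : ℕ}
    (ht : 2 * t + 1 < q) (hc1 : 2 * t + 1 < c) (hc2 : c < q) :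
    quad S t c ∈ S ∧ ({2 * t, 2 * t + 1, c} : Finset ℕ) ⊆ quad S t c := by
  obtain ⟨Q, hQ, -⟩ := hS.2 {2 * t, 2 * t + 1, c} (triple_card t c hc1)
    (by intro a ha; simp at ha; omega)
  exact Classical.epsilon_spec (p := fun Q => Q ∈ S ∧ ({2 * t, 2 * t + 1, c} : Finset ℕ) ⊆ Q) ⟨Q, hQ⟩

lemma quad_unique {q : ℕ} {S : Set (Finset ℕ)} (hS : IsSQS q S) {t c : ℕ}
    (ht : 2 * t + 1 < q) (hc1 : 2 * t + 1 < c) (hc2 : c < q)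
    {Q : Finset ℕ} (hQ : Q ∈ S) (hsub : ({2 * t, 2 * t + 1, c} : Finset ℕ) ⊆ Q) :
    Q = quad S t c := by
  obtain ⟨Q', hQ', huniq⟩ := hS.2 {2 * t, 2 * t + 1, c} (triple_card t c hc1)
    (by intro a ha; simp at ha; omega)
  rw [huniq Q ⟨hQ, hsub⟩, ← huniq (quad S t c) ⟨(quad_mem hS ht hc1 hc2).1, (quad_mem hS ht hc1 hc2).2⟩]

lemma quad_structure {q : ℕ} {S : Set (Finset ℕ)} (hS : IsSQS q S)
    (hstep : StepProperty q id S) {t c : ℕ}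
    (ht : 2 * t + 1 < q) (hc1 : 2 * t + 1 < c) (hc2 : c < q) :
    ∃ d, 2 * t + 1 < d ∧ d < q ∧ d ≠ c ∧
      quad S t c = ({2 * t, 2 * t + 1, c, d} : Finset ℕ) := by
  obtain ⟨hQS, hsub⟩ := quad_mem hS ht hc1 hc2
  obtain ⟨hcard4, hlt⟩ := hS.1 _ hQS
  have h1 : (quad S t c \ {2 * t, 2 * t + 1, c}).card = 1 := by
    rw [Finset.card_sdiff_of_subset hsub, triple_card t c hc1, hcard4]
  obtain ⟨d, hd⟩ := Finset.card_eq_one.mp h1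
  have hdmem : d ∈ quad S t c \ ({2 * t, 2 * t + 1, c} : Finset ℕ) := by
    rw [hd]; exact Finset.mem_singleton_self d
  rw [Finset.mem_sdiff] at hdmem
  have hdQ := hdmem.1
  have hdne : d ≠ 2 * t ∧ d ≠ 2 * t + 1 ∧ d ≠ c := by
    simpa using hdmem.2
  have heq : quad S t c = ({2 * t, 2 * t + 1, c, d} : Finset ℕ) := by
    have := Finset.union_sdiff_of_subset hsub
    rw [hd] at this
    rw [← this]; ext x; simp
  have hdq : d < q := hlt d hdQ
  have hmem : ({(2 * t : ℕ), 2 * t + 1, c, d} : Finset ℕ) ∈ S := heq ▸ hQS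
  have := hstep t c d ht hc2 hdq hmem
  refine ⟨d, ?_, hdq, hdne.2.2, heq⟩
  omega

open Classical in
noncomputable def Aset (q : ℕ) (S : Set (Finset ℕ)) (t : ℕ) : Finset (Finset ℕ) :=
  ((Finset.range q).powerset).filter fun Q => Q ∈ S ∧ ∃ a b, 2 * t + 1 < a ∧ 2 * t + 1 < b ∧
    a < q ∧ b < q ∧ Q = ({2 * t, 2 * t + 1, a, b} : Finset ℕ)

lemma mem_Aset {q : ℕ} {S : Set (Finset ℕ)} {t : ℕ} {Q : Finset ℕ} :
    Q ∈ Aset q S t ↔ Q ⊆ Finset.range q ∧ Q ∈ S ∧ ∃ a b, 2 * t + 1 < a ∧ 2 * t + 1 < b ∧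
      a < q ∧ b < q ∧ Q = ({2 * t, 2 * t + 1, a, b} : Finset ℕ) := by
  classical
  simp [Aset, Finset.mem_filter, Finset.mem_powerset]

lemma Aset_card {q : ℕ} {S : Set (Finset ℕ)} (hS : IsSQS q S)
    (hstep : StepProperty q id S) {t : ℕ} (ht : 2 * t + 1 < q) :
    (Aset q S t).card * 2 = q - 2 * t - 2 := by
  classical
  have hmap : ∀ c ∈ Finset.Ico (2 * t + 2) q, quad S t c ∈ Aset q S t := by
    intro c hc
    rw [Finset.mem_Ico] at hc
    have hc1 : 2 * t + 1 < c := by omega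
    obtain ⟨d, hd1, hd2, hd3, hd4⟩ := quad_structure hS hstep ht hc1 hc.2
    rw [mem_Aset]
    refine ⟨?_, (quad_mem hS ht hc1 hc.2).1, c, d, hc1, hd1, hc.2, hd2, hd4⟩
    intro x hx
    rw [Finset.mem_range]
    exact (hS.1 _ (quad_mem hS ht hc1 hc.2).1).2 x hx
  have key := Finset.card_eq_sum_card_fiberwise hmap
  have hfib : ∀ Q ∈ Aset q S t,
      ((Finset.Ico (2 * t + 2) q).filter fun c => quad S t c = Q).card = 2 := by
    intro Q hQ
    rw [mem_Aset] at hQ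
    obtain ⟨-, hQS, a, b, ha1, hb1, ha2, hb2, hQeq⟩ := hQ
    have hab : a ≠ b := by
      intro h
      have h4 := (hS.1 Q hQS).1
      have : Q = ({2 * t, 2 * t + 1, a} : Finset ℕ) := by
        rw [hQeq, h]; ext x; simp
      rw [this, triple_card t a ha1] at h4
      omega
    have hfe : ((Finset.Ico (2 * t + 2) q).filter fun c => quad S t c = Q)
        = ({a, b} : Finset ℕ) := by
      ext c
      simp only [Finset.mem_filter, Finset.mem_Ico, Finset.mem_insert, Finset.mem_singleton]
      constructor
      · rintro ⟨⟨hcl, hcu⟩, hfc⟩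
        have hc1 : 2 * t + 1 < c := by omega
        have : c ∈ quad S t c := (quad_mem hS ht hc1 hcu).2 (by simp)
        rw [hfc, hQeq] at this
        simp at this
        omega
      · rintro (rfl | rfl)
        · refine ⟨⟨by omega, ha2⟩, ?_⟩
          exact (quad_unique hS ht ha1 ha2 hQS (by rw [hQeq]; intro x hx; simp at hx ⊢; tauto)).symm
        · refine ⟨⟨by omega, hb2⟩, ?_⟩
          exact (quad_unique hS ht hb1 hb2 hQS (by rw [hQeq]; intro x hx; simp at hx ⊢; tauto)).symm
    rw [hfe, Finset.card_pair hab]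
  rw [Finset.sum_congr rfl hfib, Finset.sum_const, smul_eq_mul, Nat.card_Ico] at key
  omega

theorem stmt19 (q : ℕ) (hq : 4 ≤ q) (hqeven : Even q)
    (S : Set (Finset ℕ)) (hS : IsSQS q S)
    (hstep : StepProperty q id S) :
    {Q ∈ S | ∃ t a b : ℕ, 2 * t + 1 < q ∧ 2 * t + 1 < a ∧ 2 * t + 1 < b ∧
        a < q ∧ b < q ∧ Q = ({2 * t, 2 * t + 1, a, b} : Finset ℕ)}.ncard
      = q * (q - 2) / 8 := by
  classical
  obtain ⟨m, hm⟩ := hqeven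
  have hset : {Q ∈ S | ∃ t a b : ℕ, 2 * t + 1 < q ∧ 2 * t + 1 < a ∧ 2 * t + 1 < b ∧
        a < q ∧ b < q ∧ Q = ({2 * t, 2 * t + 1, a, b} : Finset ℕ)}
      = ↑((Finset.range (q / 2)).biUnion (Aset q S)) := by
    ext Q
    simp only [Set.mem_setOf_eq, Finset.coe_biUnion, Set.mem_iUnion, Finset.mem_coe,
      Finset.mem_range, mem_Aset]
    constructor
    · rintro ⟨hQS, t, a, b, ht, ha1, hb1, ha2, hb2, hQeq⟩
      refine ⟨t, by omega, ?_, hQS, a, b, ha1, hb1, ha2, hb2, hQeq⟩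
      rw [hQeq]; intro x hx; simp at hx; rw [Finset.mem_range]; omega
    · rintro ⟨t, htlt, -, hQS, a, b, ha1, hb1, ha2, hb2, hQeq⟩
      exact ⟨hQS, t, a, b, by omega, ha1, hb1, ha2, hb2, hQeq⟩
  rw [hset, Set.ncard_coe_finset]
  rw [Finset.card_biUnion ?disj]
  case disj =>
    intro x hx y hy hxy
    rw [Function.onFun, Finset.disjoint_left]
    intro Q hQx hQy
    rw [mem_Aset] at hQx hQy
    obtain ⟨-, -, a, b, ha1, hb1, -, -, hx'⟩ := hQx
    obtain ⟨-, -, a', b', ha1', hb1', -, -, hy'⟩ := hQy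
    apply hxy
    have h1 : (2*x : ℕ) ∈ ({2*y, 2*y+1, a', b'} : Finset ℕ) := by
      rw [← hy', hx']; simp
    have h2 : (2*y : ℕ) ∈ ({2*x, 2*x+1, a, b} : Finset ℕ) := by
      rw [← hx', hy']; simp
    simp at h1 h2
    omega
  have hq2 : q / 2 = m := by omega
  rw [hq2]
  have hsum : ∀ t ∈ Finset.range m, (Aset q S t).card = m - 1 - t := by
    intro t htm
    rw [Finset.mem_range] at htm
    have := Aset_card hS hstep (t := t) (show 2 * t + 1 < q by omega)
    omega
  rw [Finset.sum_congr rfl hsum]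
  rw [Finset.sum_range_reflect (fun j => j) m]
  have h2 := Finset.sum_range_id_mul_two m
  have hq8 : q * (q - 2) = 8 * ∑ i ∈ Finset.range m, i := by
    have e1 : q = 2 * m := by omega
    have e2 : q - 2 = 2 * (m - 1) := by omega
    rw [e2, e1]
    calc 2 * m * (2 * (m-1)) = (m * (m-1)) * 4 := by ring
    _ = ((∑ i ∈ Finset.range m, i) * 2) * 4 := by rw [h2]
    _ = 8 * ∑ i ∈ Finset.range m, i := by ring
  rw [hq8]
  omega
end
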